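/- Let M be a topological space, ≪ a binary relation on M with open pasts and open futures, and μ a finite Borel measure on M with full support (μ(W) > 0 for every nonempty open W). Let {U_α}_{α ∈ I} be a nonempty family of past sets that is totally ordered by inclusion. Then there exists a sequence (α_j)_{j ∈ ℕ} in I such that for every α ∈ I there is some j ∈ ℕ with U_{α_j} ⊆ U_α. -/

import Mathlib

open Set Filter Topology MeasureTheory

/-- The chronological past of a set `A` with respect to relation `r`. -/
def chronPast {M : Type*} (r : M → M → Prop) (A : Set M) : Set M :=
  {x | ∃ y ∈ A, r x y}

/-- The chronological future of a set `A` with respect to relation `r`. -/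
def chronFut {M : Type*} (r : M → M → Prop) (A : Set M) : Set M :=
  {x | ∃ y ∈ A, r y x}

/-- A past set: `I⁻(U) = U`. -/
def IsPastSet {M : Type*} (r : M → M → Prop) (U : Set M) : Prop :=
  chronPast r U = U

/-- A future set: `I⁺(U) = U`. -/
def IsFutureSet {M : Type*} (r : M → M → Prop) (U : Set M) : Prop :=
  chronFut r U = U

/-- An indecomposable past set (IP): a nonempty past set that is not the union of
two past sets, each a proper subset of it. -/
def IsIP {M : Type*} (r : M → M → Prop) (U : Set M) : Prop :=
  U.Nonempty ∧ IsPastSet r U ∧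
    ¬ ∃ A B : Set M, IsPastSet r A ∧ IsPastSet r B ∧ A ⊂ U ∧ B ⊂ U ∧ A ∪ B = U

/-- An indecomposable future set (IF). -/
def IsIF {M : Type*} (r : M → M → Prop) (U : Set M) : Prop :=
  U.Nonempty ∧ IsFutureSet r U ∧
    ¬ ∃ A B : Set M, IsFutureSet r A ∧ IsFutureSet r B ∧ A ⊂ U ∧ B ⊂ U ∧ A ∪ B = U

/-- A terminal indecomposable past set (TIP): an IP not of the form `I⁻(p)`. -/
def IsTIP {M : Type*} (r : M → M → Prop) (U : Set M) : Prop :=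
  IsIP r U ∧ ∀ p : M, U ≠ chronPast r {p}

/-- A terminal indecomposable future set (TIF): an IF not of the form `I⁺(p)`. -/
def IsTIF {M : Type*} (r : M → M → Prop) (U : Set M) : Prop :=
  IsIF r U ∧ ∀ p : M, U ≠ chronFut r {p}

/-- A minimal TIP: a TIP containing no TIP as a proper subset. -/
def IsMinTIP {M : Type*} (r : M → M → Prop) (U : Set M) : Prop :=
  IsTIP r U ∧ ∀ V : Set M, IsTIP r V → V ⊆ U → V = U


theorem pastSet_isOpen' {M : Type*} [TopologicalSpace M] (r : M → M → Prop)
    (hOpenPast : ∀ p : M, IsOpen (chronPast r {p})) {A : Set M} (hA : IsPastSet r A) :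
    IsOpen A := by
  have h1 : A = ⋃ y ∈ A, chronPast r {y} := by
    conv_lhs => rw [← hA]
    ext x
    simp [chronPast]
  rw [h1]
  exact isOpen_biUnion fun y _ => hOpenPast y

theorem pastSet_strict_measure' {M : Type*} [TopologicalSpace M] [MeasurableSpace M]
    [BorelSpace M] (r : M → M → Prop)
    (hOpenPast : ∀ p : M, IsOpen (chronPast r {p}))
    (hOpenFut : ∀ p : M, IsOpen (chronFut r {p}))
    (μ : Measure M) [IsFiniteMeasure μ]
    (hfull : ∀ W : Set M, IsOpen W → W.Nonempty → 0 < μ W)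
    {A B : Set M} (hA : IsPastSet r A) (hB : IsPastSet r B) (hAB : A ⊂ B) :
    μ A < μ B := by
  obtain ⟨x, hxB, hxA⟩ := Set.exists_of_ssubset hAB
  obtain ⟨y, hyB, hxy⟩ : ∃ y ∈ B, r x y := by
    have : x ∈ chronPast r B := hB.symm ▸ hxB
    exact this
  set V := chronFut r {x} ∩ B with hV
  have hVopen : IsOpen V := (hOpenFut x).inter (pastSet_isOpen' r hOpenPast hB)
  have hyV : y ∈ V := ⟨⟨x, rfl, hxy⟩, hyB⟩
  have hVA : Disjoint A V := by
    rw [Set.disjoint_right]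
    intro w hwV hwA
    obtain ⟨z, hz, hzw⟩ := hwV.1
    rw [Set.mem_singleton_iff] at hz
    exact hxA (hA ▸ (⟨w, hwA, hz ▸ hzw⟩ : x ∈ chronPast r A))
  calc μ A < μ A + μ V :=
        ENNReal.lt_add_right (measure_ne_top μ A) (hfull V hVopen ⟨y, hyV⟩).ne'
    _ = μ (A ∪ V) := (measure_union hVA hVopen.measurableSet).symm
    _ ≤ μ B := measure_mono (Set.union_subset hAB.subset Set.inter_subset_right)

/-- From a nonempty family of past sets totally ordered by inclusion, one
can extract a countable cofinal (downwards) subsequence, given a finite Borel measure of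
full support. -/
theorem stmt_9 {M : Type*} [TopologicalSpace M] [MeasurableSpace M] [BorelSpace M]
    (r : M → M → Prop)
    (hOpenPast : ∀ p : M, IsOpen (chronPast r {p}))
    (hOpenFut : ∀ p : M, IsOpen (chronFut r {p}))
    (μ : Measure M) [IsFiniteMeasure μ]
    (hfull : ∀ W : Set M, IsOpen W → W.Nonempty → 0 < μ W)
    {ι : Type*} [Nonempty ι] (U : ι → Set M)
    (hpast : ∀ α, IsPastSet r (U α))
    (hchain : ∀ α β : ι, U α ⊆ U β ∨ U β ⊆ U α) :
    ∃ f : ℕ → ι, ∀ α : ι, ∃ j : ℕ, U (f j) ⊆ U α := by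
  set m := ⨅ α, μ (U α) with hm
  by_cases h : ∃ α₀, μ (U α₀) = m
  · obtain ⟨α₀, hα₀⟩ := h
    refine ⟨fun _ => α₀, fun α => ⟨0, ?_⟩⟩
    rcases hchain α₀ α with h' | h'
    · exact h'
    · by_cases heq : U α = U α₀
      · exact heq.ge
      · have hlt : μ (U α) < μ (U α₀) :=
          pastSet_strict_measure' r hOpenPast hOpenFut μ hfull (hpast α) (hpast α₀)
            ⟨h', fun hc => heq (subset_antisymm h' hc)⟩
        exact absurd (hlt.trans_le (hα₀.trans_le (iInf_le (fun α => μ (U α)) α))) (lt_irrefl _)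
  · push_neg at h
    have hm_lt : ∀ α, m < μ (U α) := fun α =>
      lt_of_le_of_ne (iInf_le (fun α => μ (U α)) α) (Ne.symm (h α))
    have hmtop : m ≠ ⊤ := by
      obtain ⟨α⟩ := ‹Nonempty ι›
      exact ((iInf_le (fun α => μ (U α)) α).trans_lt (measure_lt_top μ (U α))).ne
    have hex : ∀ n : ℕ, ∃ α, μ (U α) < m + ((n : ENNReal) + 1)⁻¹ := by
      intro n
      have hpos : ((n : ENNReal) + 1)⁻¹ ≠ 0 :=
        ENNReal.inv_ne_zero.mpr (by simp [ENNReal.add_ne_top])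
      have h1 : m < m + ((n : ENNReal) + 1)⁻¹ := ENNReal.lt_add_right hmtop hpos
      have h2 : (⨅ α, μ (U α)) < m + ((n : ENNReal) + 1)⁻¹ := by
        rw [← hm]; exact h1
      exact iInf_lt_iff.mp h2
    choose f hf using hex
    refine ⟨f, fun α => ?_⟩
    have hd : μ (U α) - m ≠ 0 := by
      have := hm_lt α
      exact (tsub_pos_of_lt this).ne'
    obtain ⟨n, hn⟩ := ENNReal.exists_inv_nat_lt hd
    refine ⟨n, ?_⟩
    have hfn : μ (U (f n)) < μ (U α) := by
      have h1 : ((n : ENNReal) + 1)⁻¹ ≤ ((n : ENNReal))⁻¹ :=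
        ENNReal.inv_le_inv.mpr (le_add_of_nonneg_right zero_le_one)
      calc μ (U (f n)) < m + ((n : ENNReal) + 1)⁻¹ := hf n
        _ ≤ m + ((n : ENNReal))⁻¹ := add_le_add (le_refl m) h1
        _ < m + (μ (U α) - m) := ENNReal.add_lt_add_left hmtop hn
        _ = μ (U α) := add_tsub_cancel_of_le (hm_lt α).le
    rcases hchain (f n) α with h' | h'
    · exact h'
    · exact absurd (measure_mono h') (not_le.mpr hfn)
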